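/- Work in the real Banach space ℓ₁ of absolutely summable real sequences, and let e_j denote its j-th standard basis vector. For integers k ≥ 2 and r ≥ 2, let Q_i = {e_{(i−1)k+1}, …, e_{ik}} for i ∈ {1,…,r}. Then for any partition {P_1, …, P_k} of Q_1 ∪ ⋯ ∪ Q_r with |P_i ∩ Q_j| = 1 for all i, j, and for any two points a ∈ conv P_i and b ∈ conv P_{i'} with i ≠ i', one has ‖a − b‖₁ = 2; consequently, since max_j diam Q_j = 2, every closed ball intersecting the convex hull of P_i for every i ∈ {1,…,k} has radius at least 1. -/

import Mathlib

open scoped Classical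

noncomputable section IvanovAux

/-- abbreviation for ℓ¹ over ℕ -/
abbrev L1 : Type := lp (fun _ : ℕ => ℝ) 1

/-- the standard basis vector -/
noncomputable def ee (m : ℕ) : L1 := lp.single 1 m (1 : ℝ)

lemma ee_apply (m n : ℕ) : (ee m : ∀ _ : ℕ, ℝ) n = if n = m then 1 else 0 := by
  by_cases h : n = m
  · subst h; simp [ee, lp.single_apply_self]
  · simp [ee, lp.single_apply_ne _ _ _ h, h]

lemma ee_inj {m m' : ℕ} (h : ee m = ee m') : m = m' := by
  by_contra hne
  have h1 : (ee m : ∀ _ : ℕ, ℝ) m = 1 := by rw [ee_apply]; simp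
  have h2 : (ee m' : ∀ _ : ℕ, ℝ) m = 0 := by rw [ee_apply]; simp [hne]
  rw [h, h2] at h1
  norm_num at h1

lemma ee_norm (m : ℕ) : ‖ee m‖ = 1 := by
  have := lp.norm_single (p := 1) (E := fun _ : ℕ => ℝ) (by norm_num)
    m (1 : ℝ)
  simpa [ee] using this

lemma one_le_sum_abs_of_le_norm {f : L1} {s : Finset ℕ} :
    ∑ n ∈ s, |(f : ∀ _ : ℕ, ℝ) n| ≤ ‖f‖ := by
  have h := lp.sum_rpow_le_norm_rpow (p := 1) (E := fun _ : ℕ => ℝ) (by norm_num) f s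
  simpa [Real.rpow_one, Real.norm_eq_abs] using h

lemma ee_dist (m m' : ℕ) (h : m ≠ m') : ‖ee m - ee m'‖ = 2 := by
  apply le_antisymm
  · calc ‖ee m - ee m'‖ ≤ ‖ee m‖ + ‖ee m'‖ := norm_sub_le _ _
    _ = 2 := by rw [ee_norm, ee_norm]; norm_num
  · have hle := one_le_sum_abs_of_le_norm (f := ee m - ee m') (s := {m, m'})
    have hm : ((ee m - ee m' : L1) : ∀ _ : ℕ, ℝ) m = 1 := by
      rw [lp.coeFn_sub, Pi.sub_apply, ee_apply, ee_apply]
      simp [h]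
    have hm' : ((ee m - ee m' : L1) : ∀ _ : ℕ, ℝ) m' = -1 := by
      rw [lp.coeFn_sub, Pi.sub_apply, ee_apply, ee_apply]
      simp [Ne.symm h]
    rw [Finset.sum_pair h, hm, hm'] at hle
    norm_num at hle
    exact hle

end IvanovAux

/-- **Ivanov's lower-bound example in `ℓ₁`.** In the real Banach space
`ℓ₁ = lp (fun _ : ℕ => ℝ) 1` of absolutely summable sequences, with `e_j` the `j`-th
standard basis vector, let `Q i = {e_{i·k}, …, e_{i·k + (k-1)}}` for `i ∈ Fin r`
(`k ≥ 2`, `r ≥ 2`). Then `max_j diam Q_j = 2`, and for any transversal partition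
`{P_1, …, P_k}` of `Q_1 ∪ ⋯ ∪ Q_r` (with `|P_i ∩ Q_j| = 1` for all `i, j`), any two
points in convex hulls of distinct parts are at `ℓ₁`-distance exactly `2`;
consequently any closed ball meeting the convex hull of every part has radius at
least `1`. -/
theorem ivanov_l1_example
    (k r : ℕ) (hk : 2 ≤ k) (hr : 2 ≤ r)
    (Q : Fin r → Finset (lp (fun _ : ℕ => ℝ) 1))
    (hQ : ∀ i : Fin r, Q i =
      Finset.image (fun t : Fin k => lp.single 1 (i.val * k + t.val) (1 : ℝ)) Finset.univ)
    (Pparts : Fin k → Finset (lp (fun _ : ℕ => ℝ) 1))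
    (hpdisj : ∀ i i', i ≠ i' → Disjoint (Pparts i) (Pparts i'))
    (hunion : Finset.univ.biUnion Pparts = Finset.univ.biUnion Q)
    (htrans : ∀ i j, (Pparts i ∩ Q j).card = 1) :
    (⨆ j, Metric.diam (↑(Q j) : Set (lp (fun _ : ℕ => ℝ) 1))) = 2 ∧
    (∀ i i', i ≠ i' →
      ∀ a ∈ convexHull ℝ (↑(Pparts i) : Set (lp (fun _ : ℕ => ℝ) 1)),
      ∀ b ∈ convexHull ℝ (↑(Pparts i') : Set (lp (fun _ : ℕ => ℝ) 1)),
        ‖a - b‖ = 2) ∧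
    (∀ (c : lp (fun _ : ℕ => ℝ) 1) (R : ℝ),
      (∀ i, ∃ p ∈ convexHull ℝ (↑(Pparts i) : Set (lp (fun _ : ℕ => ℝ) 1)),
        dist p c ≤ R) → 1 ≤ R) := by
  classical
  -- every element of every part is a standard basis vector
  have hmem : ∀ (i : Fin k) (x : L1), x ∈ Pparts i → ∃ m, x = ee m := by
    intro i x hx
    have hx' : x ∈ Finset.univ.biUnion Pparts :=
      Finset.mem_biUnion.mpr ⟨i, Finset.mem_univ _, hx⟩
    rw [hunion] at hx'
    obtain ⟨j, -, hj⟩ := Finset.mem_biUnion.mp hx'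
    rw [hQ j] at hj
    obtain ⟨t, -, rfl⟩ := Finset.mem_image.mp hj
    exact ⟨j.val * k + t.val, rfl⟩
  -- an index function
  set ι : L1 → ℕ := fun x => if h : ∃ m, x = ee m then h.choose else 0 with hιdef
  have hι : ∀ (i : Fin k) (x : L1), x ∈ Pparts i → x = ee (ι x) := by
    intro i x hx
    have h := hmem i x hx
    simp only [hιdef, dif_pos h]
    exact h.choose_spec
  -- part 2: the distance statement
  have part2 : ∀ i i', i ≠ i' →
      ∀ a ∈ convexHull ℝ (↑(Pparts i) : Set L1),
      ∀ b ∈ convexHull ℝ (↑(Pparts i') : Set L1), ‖a - b‖ = 2 := by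
    intro i i' hii a ha b hb
    obtain ⟨w, hw0, hw1, hwa⟩ := Finset.mem_convexHull'.mp ha
    obtain ⟨v, hv0, hv1, hvb⟩ := Finset.mem_convexHull'.mp hb
    -- coordinates of a
    have ha_apply : ∀ n : ℕ, (a : ∀ _ : ℕ, ℝ) n =
        ∑ x ∈ Pparts i, w x * (x : ∀ _ : ℕ, ℝ) n := by
      intro n
      rw [← hwa, lp.coeFn_sum]
      rw [Finset.sum_apply]
      refine Finset.sum_congr rfl fun x hx => ?_
      rw [lp.coeFn_smul, Pi.smul_apply, smul_eq_mul]
    have hb_apply : ∀ n : ℕ, (b : ∀ _ : ℕ, ℝ) n =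
        ∑ y ∈ Pparts i', v y * (y : ∀ _ : ℕ, ℝ) n := by
      intro n
      rw [← hvb, lp.coeFn_sum]
      rw [Finset.sum_apply]
      refine Finset.sum_congr rfl fun y hy => ?_
      rw [lp.coeFn_smul, Pi.smul_apply, smul_eq_mul]
    -- injectivity of ι on parts
    have hinj : ∀ (j : Fin k), ∀ x ∈ Pparts j, ∀ y ∈ Pparts j, ι x = ι y → x = y := by
      intro j x hx y hy hxy
      rw [hι j x hx, hι j y hy, hxy]
    -- a at index of its own support point
    have haval : ∀ x₀ ∈ Pparts i, (a : ∀ _ : ℕ, ℝ) (ι x₀) = w x₀ := by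
      intro x₀ hx₀
      rw [ha_apply]
      rw [Finset.sum_eq_single x₀]
      · rw [hι i x₀ hx₀, ee_apply]
        simp [← hι i x₀ hx₀]
      · intro x hx hne
        rw [hι i x hx, ee_apply]
        have hne' : ι x₀ ≠ ι x := by
          intro h
          exact hne (hinj i x hx x₀ hx₀ h.symm)
        simp [hne']
      · intro h; exact absurd hx₀ h
    have hbval : ∀ y₀ ∈ Pparts i', (b : ∀ _ : ℕ, ℝ) (ι y₀) = v y₀ := by
      intro y₀ hy₀
      rw [hb_apply]
      rw [Finset.sum_eq_single y₀]
      · rw [hι i' y₀ hy₀, ee_apply]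
        simp [← hι i' y₀ hy₀]
      · intro y hy hne
        rw [hι i' y hy, ee_apply]
        have hne' : ι y₀ ≠ ι y := by
          intro h
          exact hne (hinj i' y hy y₀ hy₀ h.symm)
        simp [hne']
      · intro h; exact absurd hy₀ h
    -- cross vanishing
    have hcross : ∀ x ∈ Pparts i, ∀ y ∈ Pparts i', ι x ≠ ι y := by
      intro x hx y hy h
      have : x = y := by rw [hι i x hx, hι i' y hy, h]
      subst this
      exact (Finset.disjoint_left.mp (hpdisj i i' hii) hx) hy
    have hbzero : ∀ x₀ ∈ Pparts i, (b : ∀ _ : ℕ, ℝ) (ι x₀) = 0 := by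
      intro x₀ hx₀
      rw [hb_apply]
      refine Finset.sum_eq_zero fun y hy => ?_
      rw [hι i' y hy, ee_apply]
      have : ι x₀ ≠ ι y := hcross x₀ hx₀ y hy
      simp [this]
    have hazero : ∀ y₀ ∈ Pparts i', (a : ∀ _ : ℕ, ℝ) (ι y₀) = 0 := by
      intro y₀ hy₀
      rw [ha_apply]
      refine Finset.sum_eq_zero fun x hx => ?_
      rw [hι i x hx, ee_apply]
      have : ι y₀ ≠ ι x := fun h => hcross x hx y₀ hy₀ h.symm
      simp [this]
    -- upper bound
    have hub : ‖a - b‖ ≤ 2 := by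
      have hsub : (↑(Pparts i) : Set L1) ⊆ Metric.closedBall 0 1 := by
        intro x hx
        rw [Metric.mem_closedBall, dist_zero_right]
        obtain ⟨m, rfl⟩ := hmem i x hx
        rw [ee_norm]
      have hsub' : (↑(Pparts i') : Set L1) ⊆ Metric.closedBall 0 1 := by
        intro x hx
        rw [Metric.mem_closedBall, dist_zero_right]
        obtain ⟨m, rfl⟩ := hmem i' x hx
        rw [ee_norm]
      have hca := convexHull_min hsub (convex_closedBall (0 : L1) 1) ha
      have hcb := convexHull_min hsub' (convex_closedBall (0 : L1) 1) hb
      rw [Metric.mem_closedBall, dist_zero_right] at hca hcb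
      calc ‖a - b‖ ≤ ‖a‖ + ‖b‖ := norm_sub_le _ _
        _ ≤ 1 + 1 := add_le_add hca hcb
        _ = 2 := by norm_num
    -- lower bound
    have hlb : (2 : ℝ) ≤ ‖a - b‖ := by
      set F := (Pparts i).image ι ∪ (Pparts i').image ι with hF
      have hdisjF : Disjoint ((Pparts i).image ι) ((Pparts i').image ι) := by
        rw [Finset.disjoint_left]
        rintro n hn hn'
        obtain ⟨x, hx, rfl⟩ := Finset.mem_image.mp hn
        obtain ⟨y, hy, hxy⟩ := Finset.mem_image.mp hn'
        exact hcross x hx y hy hxy.symm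
      have hkey : ∑ n ∈ F, |((a - b : L1) : ∀ _ : ℕ, ℝ) n| = 2 := by
        rw [hF, Finset.sum_union hdisjF]
        have h1 : ∑ n ∈ (Pparts i).image ι, |((a - b : L1) : ∀ _ : ℕ, ℝ) n| = 1 := by
          rw [Finset.sum_image (fun x hx y hy h => hinj i x hx y hy h)]
          rw [← hw1]
          refine Finset.sum_congr rfl fun x hx => ?_
          rw [lp.coeFn_sub, Pi.sub_apply, haval x hx, hbzero x hx, sub_zero,
            abs_of_nonneg (hw0 x hx)]
        have h2 : ∑ n ∈ (Pparts i').image ι, |((a - b : L1) : ∀ _ : ℕ, ℝ) n| = 1 := by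
          rw [Finset.sum_image (fun x hx y hy h => hinj i' x hx y hy h)]
          rw [← hv1]
          refine Finset.sum_congr rfl fun y hy => ?_
          rw [lp.coeFn_sub, Pi.sub_apply, hazero y hy, hbval y hy, zero_sub,
            abs_neg, abs_of_nonneg (hv0 y hy)]
        rw [h1, h2]; norm_num
      calc (2 : ℝ) = ∑ n ∈ F, |((a - b : L1) : ∀ _ : ℕ, ℝ) n| := hkey.symm
        _ ≤ ‖a - b‖ := one_le_sum_abs_of_le_norm
    linarith
  refine ⟨?_, part2, ?_⟩
  · -- the supremum of diameters
    haveI : Nonempty (Fin r) := ⟨⟨0, by omega⟩⟩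
    have hdiam : ∀ j : Fin r, Metric.diam (↑(Q j) : Set L1) = 2 := by
      intro j
      apply le_antisymm
      · refine Metric.diam_le_of_forall_dist_le (by norm_num) ?_
        rintro x hx y hy
        rw [Finset.mem_coe, hQ j] at hx hy
        obtain ⟨t, -, rfl⟩ := Finset.mem_image.mp hx
        obtain ⟨s, -, rfl⟩ := Finset.mem_image.mp hy
        rw [dist_eq_norm]
        by_cases h : j.val * k + t.val = j.val * k + s.val
        · rw [h]; simp
        · calc ‖(ee (j.val * k + t.val) : L1) - ee (j.val * k + s.val)‖ = 2 :=
              ee_dist _ _ h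
            _ ≤ 2 := le_refl _
      · have h0 : (ee (j.val * k + 0) : L1) ∈ (↑(Q j) : Set L1) := by
          rw [Finset.mem_coe, hQ j]
          exact Finset.mem_image.mpr ⟨⟨0, by omega⟩, Finset.mem_univ _, rfl⟩
        have h1 : (ee (j.val * k + 1) : L1) ∈ (↑(Q j) : Set L1) := by
          rw [Finset.mem_coe, hQ j]
          exact Finset.mem_image.mpr ⟨⟨1, by omega⟩, Finset.mem_univ _, rfl⟩
        have hb : Bornology.IsBounded (↑(Q j) : Set L1) :=
          (Q j).finite_toSet.isBounded
        have := Metric.dist_le_diam_of_mem hb h0 h1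
        rw [dist_eq_norm, ee_dist _ _ (by omega)] at this
        exact this
    calc (⨆ j, Metric.diam (↑(Q j) : Set L1)) = ⨆ _ : Fin r, (2 : ℝ) := by
          congr 1; ext j; exact hdiam j
      _ = 2 := ciSup_const
  · -- the radius bound
    intro c R hR
    have h0 : (⟨0, by omega⟩ : Fin k) ≠ (⟨1, by omega⟩ : Fin k) := by
      intro h
      have := Fin.mk.injEq (n := k) 0 (by omega) 1 (by omega)
      simp [Fin.ext_iff] at h
    obtain ⟨a, ha, hac⟩ := hR ⟨0, by omega⟩
    obtain ⟨b, hb, hbc⟩ := hR ⟨1, by omega⟩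
    have habd : ‖a - b‖ = 2 := part2 _ _ h0 a ha b hb
    have : (2 : ℝ) ≤ 2 * R := by
      calc (2 : ℝ) = ‖a - b‖ := habd.symm
        _ = dist a b := (dist_eq_norm a b).symm
        _ ≤ dist a c + dist c b := dist_triangle a c b
        _ ≤ R + R := add_le_add hac (by rw [dist_comm]; exact hbc)
        _ = 2 * R := by ring
    linarith
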